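/- For n ≥ 2 and ω̂ ∈ [1/n, 1), the unique root Gₙ ≥ 1 of g(x) = (1-ω̂)xⁿ - x^{n-1} + ω̂ satisfies Gₙ ≥ (1/(1-ω̂))·((n-1)/n). -/

import Mathlib

set_option maxHeartbeats 1000000


/-- For `n ≥ 2` and `ω̂ ∈ [1/n, 1)`, the unique root `Gₙ ≥ 1` of
`g(x) = (1-ω̂)xⁿ - x^{n-1} + ω̂` satisfies `Gₙ ≥ (1/(1-ω̂))·((n-1)/n)`. -/
theorem root_lower_bound (n : ℕ) (hn : 2 ≤ n) (w : ℝ)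
    (hw : w ∈ Set.Ico (1 / (n : ℝ)) 1) (G : ℝ)
    (hG1 : 1 ≤ G) (hroot : (1 - w) * G ^ n - G ^ (n - 1) + w = 0)
    (huniq : ∀ x : ℝ, 1 ≤ x → (1 - w) * x ^ n - x ^ (n - 1) + w = 0 → x = G) :
    (1 / (1 - w)) * (((n : ℝ) - 1) / n) ≤ G := by
  obtain ⟨hw1, hw2⟩ := hw
  obtain ⟨m, rfl⟩ : ∃ m, n = m + 1 := ⟨n - 1, by omega⟩
  have hm : 1 ≤ m := by omega
  have hmr : (1:ℝ) ≤ (m:ℝ) := by exact_mod_cast hm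
  have hnr : ((m:ℝ) + 1) = ((m + 1 : ℕ) : ℝ) := by push_cast; ring
  have hnpos : (0:ℝ) < (m:ℝ) + 1 := by linarith
  have h1w : (0:ℝ) < 1 - w := by linarith
  have hwpos : 0 < w := lt_of_lt_of_le (by rw [← hnr]; positivity) hw1
  set x₀ : ℝ := (1 / (1 - w)) * ((((m+1:ℕ) : ℝ) - 1) / (m+1:ℕ)) with hx₀def
  have hx₀ : x₀ = (m:ℝ) / (((m:ℝ) + 1) * (1 - w)) := by
    rw [hx₀def]; push_cast; field_simp; ring
  show x₀ ≤ G
  by_cases hx1 : x₀ ≤ 1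
  · linarith
  push_neg at hx1
  -- Bernoulli: n*w*b^m ≤ 1 where b = (n)(1-w)/m
  set b : ℝ := ((m:ℝ) + 1) * (1 - w) / (m:ℝ) with hbdef
  have hbpos : 0 < b := by positivity
  have hber : 1 + ((m:ℝ)+1) * ((1 - b)/b) ≤ ((1:ℝ) + (1-b)/b) ^ (m+1) := by
    have h2 : (-2:ℝ) ≤ (1-b)/b := by
      rw [le_div_iff₀ hbpos]; linarith
    have := one_add_mul_le_pow h2 (m+1)
    push_cast at this ⊢
    linarith
  have hbinv : (1:ℝ) + (1-b)/b = 1/b := by field_simp; ring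
  have hmb : ((m:ℝ)) * b = ((m:ℝ)+1) * (1 - w) := by
    rw [hbdef]; field_simp
  have hlhs : 1 + ((m:ℝ)+1) * ((1 - b)/b) = (((m:ℝ)+1) * w) / b := by
    field_simp
    nlinarith [hmb]
  rw [hlhs, hbinv] at hber
  have hbm : (0:ℝ) < b ^ m := by positivity
  have hkey : ((m:ℝ)+1) * w * b ^ m ≤ 1 := by
    have h1 : (((m:ℝ)+1) * w) / b * b ^ (m+1) ≤ (1/b) ^ (m+1) * b ^ (m+1) := by
      apply mul_le_mul_of_nonneg_right hber (by positivity)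
    have h2 : (1/b : ℝ) ^ (m+1) * b ^ (m+1) = 1 := by
      rw [div_pow, one_pow]; field_simp
    have h3 : (((m:ℝ)+1) * w) / b * b ^ (m+1) = ((m:ℝ)+1) * w * b ^ m := by
      rw [pow_succ]; field_simp
    rw [h2, h3] at h1; exact h1
  -- x₀ = 1/b
  have hx₀b : x₀ = 1 / b := by
    rw [hx₀, hbdef]
    rw [one_div_div]
  have hx₀m : ((m:ℝ)+1) * w ≤ x₀ ^ m := by
    have : x₀ ^ m = 1 / b ^ m := by rw [hx₀b, div_pow, one_pow]
    rw [this, le_div_iff₀ hbm]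
    exact hkey
  -- g(x₀) ≤ 0
  have hgx₀ : (1 - w) * x₀ ^ (m+1) - x₀ ^ (m+1-1) + w ≤ 0 := by
    have hs : m + 1 - 1 = m := by omega
    rw [hs, pow_succ]
    have hx₀w : (1 - w) * x₀ = (m:ℝ) / ((m:ℝ)+1) := by
      rw [hx₀]; field_simp
    have : (1 - w) * (x₀ ^ m * x₀) - x₀ ^ m + w
        = x₀ ^ m * ((1 - w) * x₀ - 1) + w := by ring
    rw [this, hx₀w]
    have h4 : (m:ℝ) / ((m:ℝ)+1) - 1 = -(1 / ((m:ℝ)+1)) := by field_simp; ring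
    rw [h4]
    have h5 : w ≤ x₀ ^ m * (1 / ((m:ℝ)+1)) := by
      rw [mul_one_div, le_div_iff₀ hnpos]
      linarith
    linarith
  -- g(1/(1-w)) = w
  set B : ℝ := 1 / (1 - w) with hBdef
  have hBpos : 0 < B := by positivity
  have hgB : (1 - w) * B ^ (m+1) - B ^ (m+1-1) + w = w := by
    have hs : m + 1 - 1 = m := by omega
    rw [hs, pow_succ]
    have : (1 - w) * B = 1 := by rw [hBdef]; field_simp
    rw [show (1 - w) * (B ^ m * B) = B ^ m * ((1-w) * B) by ring, this]
    ring
  have hx₀B : x₀ ≤ B := by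
    rw [hx₀, hBdef]
    rw [div_le_div_iff₀ (by positivity) h1w]
    nlinarith [h1w]

  -- IVT
  have hcont : ContinuousOn (fun x : ℝ => (1 - w) * x ^ (m+1) - x ^ (m+1-1) + w) (Set.Icc x₀ B) := by
    fun_prop
  have hmem : (0:ℝ) ∈ Set.Icc ((1 - w) * x₀ ^ (m+1) - x₀ ^ (m+1-1) + w)
      ((1 - w) * B ^ (m+1) - B ^ (m+1-1) + w) := by
    constructor
    · exact hgx₀
    · rw [hgB]; linarith
  obtain ⟨c, hc, hfc⟩ := intermediate_value_Icc hx₀B hcont hmem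
  have hc1 : 1 ≤ c := le_trans (le_of_lt hx1) hc.1
  have := huniq c hc1 hfc
  linarith [hc.1, this.symm.le]
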